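/- arXiv:1704.08901 — 2 statements merged into one kernel-verified Lean document; each statement's English description precedes it below -/
import Mathlib

section
/- In the main setting with L = Q :_R a, one has aL = aQ and L² = QL. -/
noncomputable section

open RingTheory.Sequence

universe u v

variable (R : Type u) [CommRing R]

/-- The length of an `R`-module, defined as the Krull dimension of its lattice of submodules
(equivalently, the supremum of lengths of chains of submodules), truncated to `ℕ`. -/
noncomputable def mLength (M : Type v) [AddCommGroup M] [Module R M] : ℕ :=
  WithTop.untopD 0 (WithBot.unbotD 0 (Order.krullDim (Submodule R M)))

/-- The depth of an `R`-module `M` with respect to an ideal `I` : the supremum of lengths of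
regular sequences on `M` consisting of elements of `I`. -/
noncomputable def iDepth (I : Ideal R) (M : Type v) [AddCommGroup M] [Module R M] : ℕ∞ :=
  sSup {n : ℕ∞ | ∃ rs : List R, (∀ r ∈ rs, r ∈ I) ∧ IsRegular M rs ∧ (rs.length : ℕ∞) = n}

/-- A Cohen–Macaulay local ring: a Noetherian local ring whose depth equals its Krull
dimension. -/
def IsCMLocalRing : Prop :=
  IsLocalRing R ∧ IsNoetherianRing R ∧
    ∀ m : Ideal R, m.IsMaximal → (iDepth R m R : WithBot ℕ∞) = ringKrullDim R

/-- The dimension of a module `M` is `s`, i.e. `dim R/ann M = s`. -/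
def moduleDimIs (M : Type v) [AddCommGroup M] [Module R M] (s : ℕ) : Prop :=
  ringKrullDim (R ⧸ Module.annihilator R M) = (s : WithBot ℕ∞)

/-- A (nonzero finitely generated) Cohen–Macaulay module over a local ring:
depth M = dim M. -/
def IsCMModule (M : Type v) [AddCommGroup M] [Module R M] : Prop :=
  Module.Finite R M ∧
    ∀ m : Ideal R, m.IsMaximal →
      (iDepth R m M : WithBot ℕ∞) = ringKrullDim (R ⧸ Module.annihilator R M)

/-- The Ext module `Ext_R^i(N, M)`. -/
noncomputable def extMod (i : ℕ) (N M : Type u) [AddCommGroup N] [Module R N]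
    [AddCommGroup M] [Module R M] : ModuleCat.{u} R :=
  ((Ext R (ModuleCat.{u} R) i).obj (Opposite.op (ModuleCat.of R N))).obj (ModuleCat.of R M)

/-- `M` is a canonical module of the `d`-dimensional Cohen--Macaulay local ring `R` :
`M` is finitely generated and its Bass numbers `μ^i = dim_k Ext^i(k, M)` are `1` in degree `d`
and `0` elsewhere. -/
def IsCanonicalModule (d : ℕ) (M : Type u) [AddCommGroup M] [Module R M] : Prop :=
  Module.Finite R M ∧
    ∀ m : Ideal R, m.IsMaximal → ∀ i : ℕ,
      (i = d → Nonempty ((extMod R i (R ⧸ m) M) ≃ₗ[R] (R ⧸ m))) ∧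
      (i ≠ d → Subsingleton (extMod R i (R ⧸ m) M))

/-- A Gorenstein local ring: a Cohen–Macaulay local ring which is its own canonical module. -/
def IsGorensteinLocalRing : Prop :=
  IsCMLocalRing R ∧ ∀ d : ℕ, ringKrullDim R = (d : WithBot ℕ∞) → IsCanonicalModule R d R

/-- The Cohen–Macaulay type of `R` (of dimension `d`) equals `r`:
`r = dim_k Ext^d(k, R)`. -/
def HasCMTypeEq (d r : ℕ) : Prop :=
  ∀ m : Ideal R, m.IsMaximal → mLength R (extMod R d (R ⧸ m) R) = r

/-- `e` gives the Hilbert coefficients of the ideal `J` in the `d`-dimensional local ring `R`: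
for all large `n`, `ℓ(R/J^{n+1}) = Σ_{i=0}^d (-1)^i e_i binom(n+d-i, d-i)`. -/
def HasHilbertCoeffs (J : Ideal R) (d : ℕ) (e : ℕ → ℤ) : Prop :=
  ∃ N : ℕ, ∀ n ≥ N, (mLength R (R ⧸ J ^ (n + 1)) : ℤ) =
    ∑ i ∈ Finset.range (d + 1), (-1) ^ i * e i * ((n + d - i).choose (d - i) : ℤ)

/-- The multiplicity `e_a^0(M)` of the `s`-dimensional module `M` with respect to `a` is `e`:
`s! ℓ(M/a^{n+1}M)/n^s → e`. -/
def HasMultiplicity (a : Ideal R) (M : Type v) [AddCommGroup M] [Module R M]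
    (s : ℕ) (e : ℕ) : Prop :=
  Filter.Tendsto
    (fun n : ℕ => (Nat.factorial s : ℝ) *
      (mLength R (M ⧸ (a ^ (n + 1) • (⊤ : Submodule R M))) : ℝ) / (n : ℝ) ^ s)
    Filter.atTop (nhds (e : ℝ))

/-- `M` is free as a module over `R/a` (equivalently, `R`-linearly isomorphic to a direct sum
of copies of `R/a`). -/
def IsFreeOver (a : Ideal R) (M : Type u) [AddCommGroup M] [Module R M] : Prop :=
  ∃ ι : Type u, Nonempty (M ≃ₗ[R] (ι →₀ R ⧸ a))

/-- `M` is an Ulrich module with respect to the `m`-primary ideal `a`: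
`M` is Cohen–Macaulay, `e_a^0(M) = ℓ(M/aM)`, and `M/aM` is `R/a`-free. -/
def IsUlrichModule (a : Ideal R) (M : Type u) [AddCommGroup M] [Module R M] : Prop :=
  IsCMModule R M ∧
    (∃ s : ℕ, moduleDimIs R M s ∧
      HasMultiplicity R a M s (mLength R (M ⧸ (a • (⊤ : Submodule R M))))) ∧
    IsFreeOver R a (M ⧸ (a • (⊤ : Submodule R M)))

/-- `R` is generalized Gorenstein with respect to `a`, witnessed by the canonical module `M`:
there is an exact sequence `0 → R → M → C → 0` with `C` Ulrich with respect to `a` and with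
`R/a → M/aM` injective. -/
def IsGGLWith (a : Ideal R) (M : Type u) [AddCommGroup M] [Module R M] : Prop :=
  ∃ φ : R →ₗ[R] M, Function.Injective φ ∧
    IsUlrichModule R a (M ⧸ LinearMap.range φ) ∧
    ∀ r : R, φ r ∈ a • (⊤ : Submodule R M) → r ∈ a

/-- `f` is a system of parameters of `R` (of dimension `d`): it generates an ideal whose
radical is the maximal ideal. -/
def IsParameterSystem (d : ℕ) (f : Fin d → R) : Prop :=
  ringKrullDim R = (d : WithBot ℕ∞) ∧
    ∀ m : Ideal R, m.IsMaximal → (Ideal.span (Set.range f)).radical = m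

/-- `a` is an `m`-primary ideal of the local ring `R`. -/
def IsMPrimaryIdeal (a : Ideal R) : Prop :=
  a ≠ ⊤ ∧ ∀ m : Ideal R, m.IsMaximal → a.radical = m

/-- The colon submodule `Y : X` inside a commutative `R`-algebra `A`. -/
def resid (A : Type v) [CommRing A] [Algebra R A] (Y X : Submodule R A) : Submodule R A where
  carrier := {y | ∀ x ∈ X, y * x ∈ Y}
  add_mem' := by
    intro a b ha hb x hx
    simpa [add_mul] using Y.add_mem (ha x hx) (hb x hx)
  zero_mem' := by intro x hx; simp
  smul_mem' := by
    intro c y hy x hx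
    rw [smul_mul_assoc]
    exact Submodule.smul_mem Y c (hy x hx)

/-- The fractional ideal `I/a = {x/a : x ∈ I}` inside the total quotient ring of `R`
(for `a` a nonzerodivisor belonging to a reduction of `I`). -/
noncomputable def fracByDiv (I : Ideal R) (a : R) : Submodule R (FractionRing R) :=
  Submodule.comap ((Algebra.lmul R (FractionRing R)) (algebraMap R (FractionRing R) a))
    (Submodule.map (Algebra.linearMap R (FractionRing R)) I)


namespace GGL10
open Ideal

variable {A : Type*} [CommRing A]

/-- `x` is a nonzerodivisor modulo the ideal `B`. -/
def NZD (B : Ideal A) (x : A) : Prop := ∀ z, z * x ∈ B → z ∈ B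

/-- Regular sequence over a base ideal, in colon form. -/
def RegSeq : Ideal A → List A → Prop
  | _, [] => True
  | B, x :: xs => NZD B x ∧ RegSeq (B ⊔ Ideal.span {x}) xs

lemma regseq_nil (B : Ideal A) : RegSeq B ([] : List A) := trivial

lemma regseq_cons {B : Ideal A} {x : A} {xs : List A} :
    RegSeq B (x :: xs) ↔ NZD B x ∧ RegSeq (B ⊔ Ideal.span {x}) xs := Iff.rfl

lemma regseq_append {B : Ideal A} {l₁ l₂ : List A} :
    RegSeq B (l₁ ++ l₂) ↔ RegSeq B l₁ ∧ RegSeq (B ⊔ Ideal.ofList l₁) l₂ := by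
  induction l₁ generalizing B with
  | nil => simp [regseq_nil, RegSeq]
  | cons x xs ih =>
      simp only [List.cons_append, regseq_cons, ih, Ideal.ofList_cons]
      constructor
      · rintro ⟨h1, h2, h3⟩
        refine ⟨⟨h1, h2⟩, ?_⟩
        rwa [sup_assoc] at h3
      · rintro ⟨⟨h1, h2⟩, h3⟩
        refine ⟨h1, h2, ?_⟩
        rwa [← sup_assoc] at h3


section LocalNoeth
variable [IsNoetherianRing A] [IsLocalRing A]

lemma span_singleton_le_jacobson {a : A} (ha : a ∈ IsLocalRing.maximalIdeal A) :
    Ideal.span {a} ≤ (⊥ : Ideal A).jacobson := by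
  rw [IsLocalRing.jacobson_eq_maximalIdeal ⊥ bot_ne_top]
  exact (Ideal.span_singleton_le_iff_mem _).mpr ha

lemma nzd_swap {B : Ideal A} {a b : A}
    (ha : a ∈ IsLocalRing.maximalIdeal A)
    (h1 : NZD B a) (h2 : NZD (B ⊔ Ideal.span {a}) b) :
    NZD B b ∧ NZD (B ⊔ Ideal.span {b}) a := by
  constructor
  · -- Nakayama argument
    set N : Ideal A := Submodule.colon B (Ideal.span {b}) with hN
    have hmem : ∀ z : A, z ∈ N ↔ z * b ∈ B := by
      intro z; rw [hN]; exact Ideal.mem_colon_span_singleton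
    have key : N ≤ B ⊔ Ideal.span {a} • N := by
      intro z hz
      have hzb : z * b ∈ B := (hmem z).mp hz
      have : z ∈ B ⊔ Ideal.span {a} := h2 z (Ideal.mem_sup_left hzb)
      obtain ⟨α, hα, t, ht, rfl⟩ := Submodule.mem_sup.mp this
      obtain ⟨c, rfl⟩ := Ideal.mem_span_singleton'.mp ht
      have hcb : (c * b) * a ∈ B := by
        have h0 : (α + c * a) * b ∈ B := hzb
        have h' : c * a * b ∈ B := by
          have := B.sub_mem h0 (B.mul_mem_right b hα)
          simpa [add_mul] using this
        have he : (c * b) * a = c * a * b := by ring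
        rw [he]; exact h'
      have hc : c ∈ N := (hmem c).mpr (h1 _ hcb)
      refine Submodule.add_mem _ (Ideal.mem_sup_left hα) (Ideal.mem_sup_right ?_)
      have : a • c ∈ Ideal.span {a} • N :=
        Submodule.smul_mem_smul (Ideal.mem_span_singleton_self a) hc
      simpa [smul_eq_mul, mul_comm] using this
    have hle : N ≤ B :=
      Submodule.le_of_le_smul_of_le_jacobson_bot (IsNoetherian.noetherian N)
        (span_singleton_le_jacobson ha) key
    exact fun z hz => hle ((hmem z).mpr hz)
  · intro z hz
    obtain ⟨α, hα, t, ht, hzdec⟩ := Submodule.mem_sup.mp hz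
    obtain ⟨c, rfl⟩ := Ideal.mem_span_singleton'.mp ht
    have hcb : c * b ∈ B ⊔ Ideal.span {a} := by
      have : c * b = z * a - α := by linear_combination hzdec
      rw [this]
      exact Submodule.sub_mem _ (Ideal.mem_sup_right
        (Ideal.mem_span_singleton'.mpr ⟨z, rfl⟩)) (Ideal.mem_sup_left hα)
    have := h2 c hcb
    obtain ⟨β, hβ, u, hu, hcdec⟩ := Submodule.mem_sup.mp this
    obtain ⟨e, rfl⟩ := Ideal.mem_span_singleton'.mp hu
    have hfin : (z - e * b) * a ∈ B := by
      have he : (z - e * b) * a = α + β * b := by linear_combination -hzdec - b * hcdec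
      rw [he]
      exact B.add_mem hα (B.mul_mem_right b hβ)
    have hz2 : z = (z - e * b) + b * e := by ring
    rw [hz2]
    exact Submodule.add_mem _ (Ideal.mem_sup_left (h1 _ hfin))
      (Ideal.mem_sup_right (Ideal.mem_span_singleton'.mpr ⟨e, mul_comm e b⟩))

lemma regseq_swap {B : Ideal A} {a b : A} {l : List A}
    (ha : a ∈ IsLocalRing.maximalIdeal A) (h : RegSeq B (a :: b :: l)) :
    RegSeq B (b :: a :: l) := by
  obtain ⟨h1, h2, h3⟩ := h
  obtain ⟨g1, g2⟩ := nzd_swap ha h1 h2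
  exact ⟨g1, g2, by rwa [sup_right_comm] at h3⟩

end LocalNoeth

/-! ### Associated-prime machinery (DIY) -/

/-- The set of "associated primes" of `A ⧸ B`, in ideal language. -/
def assP (B : Ideal A) : Set (Ideal A) :=
  {p | p.IsPrime ∧ ∃ w, w ∉ B ∧ p = Submodule.colon B (Ideal.span {w})}

lemma assP_le {B p : Ideal A} (hp : p ∈ assP B) : B ≤ p := by
  obtain ⟨-, w, -, rfl⟩ := hp
  intro z hz
  exact Ideal.mem_colon_span_singleton.mpr (B.mul_mem_right w hz)

lemma mem_assP_of_zd [IsNoetherianRing A] {B : Ideal A} {z w : A} (hw : w ∉ B)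
    (h : z * w ∈ B) : ∃ p ∈ assP B, z ∈ p := by
  set S : Set (Ideal A) :=
    {I | ∃ v, v ∉ B ∧ I = Submodule.colon B (Ideal.span {v}) ∧ z ∈ I} with hS
  have hSne : S.Nonempty := by
    refine ⟨Submodule.colon B (Ideal.span {w}), w, hw, rfl, ?_⟩
    exact Ideal.mem_colon_span_singleton.mpr h
  obtain ⟨p, hpS, hpmax⟩ := (wellFounded_gt (α := Ideal A)).has_min S hSne
  obtain ⟨v₀, hv₀, hpeq, hzp⟩ := hpS
  have hmemp : ∀ t : A, t ∈ p ↔ t * v₀ ∈ B := by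
    intro t; rw [hpeq]; exact Ideal.mem_colon_span_singleton
  have hprime : p.IsPrime := by
    constructor
    · intro htop
      exact hv₀ (by simpa using (hmemp 1).mp (htop ▸ Submodule.mem_top))
    · intro x y hxy
      by_cases hy : y ∈ p
      · exact Or.inr hy
      · left
        have hyv : y * v₀ ∉ B := fun hc => hy ((hmemp y).mpr hc)
        set I : Ideal A := Submodule.colon B (Ideal.span {y * v₀}) with hI
        have hmemI : ∀ t : A, t ∈ I ↔ t * (y * v₀) ∈ B := by
          intro t; rw [hI]; exact Ideal.mem_colon_span_singleton
        have hIS : I ∈ S := by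
          refine ⟨y * v₀, hyv, rfl, ?_⟩
          refine (hmemI z).mpr ?_
          have : z * (y * v₀) = y * (z * v₀) := by ring
          rw [this]
          exact B.mul_mem_left y ((hmemp z).mp hzp)
        have hpI : p ≤ I := by
          intro t ht
          refine (hmemI t).mpr ?_
          have : t * (y * v₀) = y * (t * v₀) := by ring
          rw [this]
          exact B.mul_mem_left y ((hmemp t).mp ht)
        have hIeqp : I = p := by
          by_contra hne
          exact hpmax I hIS (lt_of_le_of_ne hpI (Ne.symm hne))
        rw [← hIeqp, hmemI]
        have : x * (y * v₀) = x * y * v₀ := by ring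
        rw [this]
        exact (hmemp (x * y)).mp hxy
  exact ⟨p, ⟨hprime, v₀, hv₀, hpeq⟩, hzp⟩

lemma nzd_of_forall_not_mem_assP [IsNoetherianRing A] {B : Ideal A} {z : A}
    (h : ∀ p ∈ assP B, z ∉ p) : NZD B z := by
  intro y hy
  by_contra hyB
  obtain ⟨p, hp, hzp⟩ := mem_assP_of_zd hyB (by rwa [mul_comm] at hy)
  exact h p hp hzp

lemma assP_finite [IsNoetherianRing A] (B : Ideal A) : (assP B).Finite := by
  induction B using IsNoetherian.induction with
  | _ C IH =>
    rcases Set.eq_empty_or_nonempty (assP C) with he | ⟨p, hp⟩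
    · rw [he]; exact Set.finite_empty
    · obtain ⟨hpprime, w, hw, hpeq⟩ := hp
      have hmemp : ∀ t : A, t ∈ p ↔ t * w ∈ C := by
        intro t; rw [hpeq]; exact Ideal.mem_colon_span_singleton
      have hlt : C < C ⊔ Ideal.span {w} := by
        rw [left_lt_sup]
        intro hle
        exact hw (hle (Ideal.mem_span_singleton_self w))
      have hsub : assP C ⊆ insert p (assP (C ⊔ Ideal.span {w})) := by
        rintro q ⟨hqprime, v, hv, hqeq⟩
        have hmemq : ∀ t : A, t ∈ q ↔ t * v ∈ C := by
          intro t; rw [hqeq]; exact Ideal.mem_colon_span_singleton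
        by_cases hcase : ∃ r, r * v ∈ C ⊔ Ideal.span {w} ∧ r * v ∉ C
        · left
          obtain ⟨r, hrv, hrvC⟩ := hcase
          obtain ⟨c, hc, t, ht, hdec⟩ := Submodule.mem_sup.mp hrv
          obtain ⟨sc, rfl⟩ := Ideal.mem_span_singleton'.mp ht
          have hsw : sc * w ∉ C := by
            intro hcon
            exact hrvC (hdec ▸ C.add_mem hc hcon)
          have hsnp : sc ∉ p := fun hsp => hsw ((hmemp sc).mp hsp)
          have hrnq : r ∉ q := fun hrq => hrvC ((hmemq r).mp hrq)
          -- q = p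
          ext t
          rw [hmemq, hmemp]
          constructor
          · intro htv
            -- t * v ∈ C → t * w ∈ C : via t*(r*v) = t*(c + sc*w)
            have h1 : t * (r * v) ∈ C := by
              have : t * (r * v) = r * (t * v) := by ring
              rw [this]; exact Ideal.mul_mem_left C r htv
            have h2 : t * sc * w ∈ C := by
              have : t * sc * w = t * (r * v) - t * c := by
                rw [← hdec]; ring
              rw [this]
              exact C.sub_mem h1 (Ideal.mul_mem_left C t hc)
            have : t * sc ∈ p := (hmemp _).mpr h2
            rcases hpprime.mem_or_mem this with h | h
            · exact (hmemp t).mp h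
            · exact absurd h hsnp
          · intro htw
            have h2 : t * (r * v) ∈ C := by
              have : t * (r * v) = t * c + sc * (t * w) := by
                rw [← hdec]; ring
              rw [this]
              exact C.add_mem (Ideal.mul_mem_left C t hc) (Ideal.mul_mem_left C sc htw)
            have : t * r ∈ q := by
              refine (hmemq _).mpr ?_
              have : t * r * v = t * (r * v) := by ring
              rw [this]; exact h2
            rcases hqprime.mem_or_mem this with h | h
            · exact (hmemq t).mp h
            · exact absurd h hrnq
        · right
          push_neg at hcase
          refine ⟨hqprime, v, ?_, ?_⟩
          · intro hvmem
            exact hv (by simpa using hcase 1 (by simpa using hvmem))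
          · rw [hqeq]
            ext t
            rw [Ideal.mem_colon_span_singleton, Ideal.mem_colon_span_singleton]
            exact ⟨fun h => Ideal.mem_sup_left h, fun h => hcase t h⟩
      exact Set.Finite.subset ((IH _ hlt).insert p) hsub

/-! ### Davis' prime avoidance -/

lemma davis (s : Finset (Ideal A)) (hs : ∀ p ∈ s, p.IsPrime) (x : A) (I : Ideal A)
    (hI : ∀ p ∈ s, ¬(x ∈ p ∧ I ≤ p)) : ∃ y ∈ I, ∀ p ∈ s, x + y ∉ p := by
  classical
  induction s using Finset.strongInduction with
  | _ s ih =>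
    rcases s.eq_empty_or_nonempty with rfl | hne
    · exact ⟨0, I.zero_mem, by simp⟩
    obtain ⟨m₀, hm₀s, hmin⟩ := s.exists_minimal hne
    have hm₀prime : m₀.IsPrime := hs m₀ hm₀s
    set s' := s.erase m₀ with hs'def
    have hs'sub : s' ⊂ s := Finset.erase_ssubset hm₀s
    obtain ⟨y', hy'I, hy'⟩ := ih s' hs'sub
      (fun p hp => hs p (Finset.mem_of_mem_erase hp))
      (fun p hp => hI p (Finset.mem_of_mem_erase hp))
    by_cases hx0 : x + y' ∈ m₀
    · have hIm : ¬ I ≤ m₀ := by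
        intro hIle
        have hx : x ∈ m₀ := by
          have := m₀.sub_mem hx0 (hIle hy'I)
          simpa using this
        exact hI m₀ hm₀s ⟨hx, hIle⟩
      obtain ⟨c, hcI, hcm⟩ := SetLike.not_le_iff_exists.mp hIm
      have hchoice : ∀ p ∈ s', ∃ u, u ∈ p ∧ u ∉ m₀ := by
        intro p hp
        have hne' : p ≠ m₀ := Finset.ne_of_mem_erase hp
        have hnle : ¬ p ≤ m₀ := by
          intro hle
          exact hne' (le_antisymm hle (by
            by_contra hm₀p
            exact hm₀p (hmin (Finset.mem_of_mem_erase hp) hle)))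
        obtain ⟨u, hu1, hu2⟩ := SetLike.not_le_iff_exists.mp hnle
        exact ⟨u, hu1, hu2⟩
      choose u hu1 hu2 using hchoice
      set t := ∏ p ∈ s'.attach, u p.1 p.2 with htdef
      have ht1 : ∀ p ∈ s', t ∈ p := by
        intro p hp
        rw [htdef, ← Finset.mul_prod_erase s'.attach _ (Finset.mem_attach s' ⟨p, hp⟩)]
        exact p.mul_mem_right _ (hu1 p hp)
      have ht2 : t ∉ m₀ := by
        rw [htdef]
        intro hcon
        obtain ⟨⟨p, hp⟩, -, hmem⟩ := (hm₀prime.prod_mem_iff).mp hcon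
        exact hu2 p hp hmem
      refine ⟨y' + t * c, I.add_mem hy'I (I.mul_mem_left t hcI), ?_⟩
      intro p hps
      by_cases hpm : p = m₀
      · subst hpm
        intro hcon
        have : t * c ∈ p := by
          have h' : x + (y' + t * c) - (x + y') = t * c := by ring
          exact h' ▸ p.sub_mem hcon hx0
        rcases hm₀prime.mem_or_mem this with h | h
        · exact ht2 h
        · exact hcm h
      · have hp' : p ∈ s' := Finset.mem_erase.mpr ⟨hpm, hps⟩
        intro hcon
        have : x + y' ∈ p := by
          have h' : x + (y' + t * c) - t * c = x + y' := by ring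
          exact h' ▸ p.sub_mem hcon (p.mul_mem_right c (ht1 p hp'))
        exact hy' p hp' this
    · refine ⟨y', hy'I, ?_⟩
      intro p hps
      by_cases hpm : p = m₀
      · subst hpm; exact hx0
      · exact hy' p (Finset.mem_erase.mpr ⟨hpm, hps⟩)


lemma avoid (S : Set (Ideal A)) (hfin : S.Finite) (hs : ∀ p ∈ S, p.IsPrime) (I : Ideal A)
    (h : ∀ p ∈ S, ¬ I ≤ p) : ∃ y ∈ I, ∀ p ∈ S, y ∉ p := by
  classical
  obtain ⟨y, hyI, hy⟩ := davis hfin.toFinset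
    (fun p hp => hs p (hfin.mem_toFinset.mp hp)) 0 I
    (fun p hp hc => h p (hfin.mem_toFinset.mp hp) hc.2)
  refine ⟨y, hyI, fun p hp => ?_⟩
  have := hy p (hfin.mem_toFinset.mpr hp)
  simpa using this

section KL
variable [IsNoetherianRing A] [IsLocalRing A]

lemma Klem :
    ∀ (n : ℕ) (B : Ideal A) (xs : List A) (y : A), xs.length = n →
      (∀ x ∈ xs, x ∈ IsLocalRing.maximalIdeal A) → RegSeq B xs →
      y ∈ IsLocalRing.maximalIdeal A → NZD B y →
      ∃ ts : List A, ts.length = n - 1 ∧ (∀ t ∈ ts, t ∈ IsLocalRing.maximalIdeal A) ∧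
        RegSeq B (y :: ts) := by
  intro n
  induction n with
  | zero =>
      intro B xs y _ _ _ _ hy
      exact ⟨[], rfl, by simp, hy, trivial⟩
  | succ n ih =>
      intro B xs y hlen hxm hxs hym hy
      rcases xs with _ | ⟨x₁, xs'⟩
      · simp at hlen
      have hlen' : xs'.length = n := by simpa using hlen
      obtain ⟨hx₁, hxs'⟩ := hxs
      have hx₁m : x₁ ∈ IsLocalRing.maximalIdeal A := hxm x₁ (by simp)
      rcases xs' with _ | ⟨x₂, rest⟩
      · have hn0 : n = 0 := by simpa using hlen'.symm
        subst hn0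
        exact ⟨[], rfl, by simp, hy, trivial⟩
      have hx₂ := hxs'.1
      have hx₂m : x₂ ∈ IsLocalRing.maximalIdeal A := hxm x₂ (by simp)
      have hn1 : 1 ≤ n := by
        have := hlen'; simp at this; omega
      -- choose u ∈ m, NZD mod B ⊔ (x₁) and mod B ⊔ (y)
      set S := assP (B ⊔ Ideal.span {x₁}) ∪ assP (B ⊔ Ideal.span {y}) with hSdef
      have hSfin : S.Finite := (assP_finite _).union (assP_finite _)
      have hSprime : ∀ p ∈ S, p.IsPrime := by
        rintro p (hp | hp) <;> exact hp.1
      have hSavoid : ∀ p ∈ S, ¬ (IsLocalRing.maximalIdeal A ≤ p) := by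
        rintro p (hp | hp) hle
        · obtain ⟨-, w, hw, hpeq⟩ := hp
          have hmem : ∀ t : A, t ∈ p ↔ t * w ∈ B ⊔ Ideal.span {x₁} := by
            intro t; rw [hpeq]; exact Ideal.mem_colon_span_singleton
          have : w * x₂ ∈ B ⊔ Ideal.span {x₁} := by
            rw [mul_comm]; exact (hmem x₂).mp (hle hx₂m)
          exact hw (hx₂ w this)
        · obtain ⟨-, w, hw, hpeq⟩ := hp
          have hmem : ∀ t : A, t ∈ p ↔ t * w ∈ B ⊔ Ideal.span {y} := by
            intro t; rw [hpeq]; exact Ideal.mem_colon_span_singleton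
          have h1 : x₁ * w ∈ B ⊔ Ideal.span {y} := (hmem x₁).mp (hle hx₁m)
          have h2 : x₂ * w ∈ B ⊔ Ideal.span {y} := (hmem x₂).mp (hle hx₂m)
          obtain ⟨α, hα, t1, ht1, hdec1⟩ := Submodule.mem_sup.mp h1
          obtain ⟨c₁, rfl⟩ := Ideal.mem_span_singleton'.mp ht1
          obtain ⟨β, hβ, t2, ht2, hdec2⟩ := Submodule.mem_sup.mp h2
          obtain ⟨c₂, rfl⟩ := Ideal.mem_span_singleton'.mp ht2
          have key : (x₂ * c₁ - x₁ * c₂) * y ∈ B := by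
            have he : (x₂ * c₁ - x₁ * c₂) * y = x₁ * β - x₂ * α +
                (x₂ * (α + c₁ * y) - x₁ * (β + c₂ * y)) := by ring
            rw [he, hdec1, hdec2]
            have he2 : x₁ * β - x₂ * α + (x₂ * (x₁ * w) - x₁ * (x₂ * w)) =
                x₁ * β - x₂ * α := by ring
            rw [he2]
            exact B.sub_mem (Ideal.mul_mem_left B x₁ hβ) (Ideal.mul_mem_left B x₂ hα)
          have hc₁ : c₁ ∈ B ⊔ Ideal.span {x₁} := by
            apply hx₂
            have hmem2 : x₂ * c₁ - x₁ * c₂ ∈ B := hy _ key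
            have he : c₁ * x₂ = (x₂ * c₁ - x₁ * c₂) + x₁ * c₂ := by ring
            rw [he]
            exact Submodule.add_mem _ (Ideal.mem_sup_left hmem2)
              (Ideal.mem_sup_right (Ideal.mem_span_singleton'.mpr ⟨c₂, mul_comm c₂ x₁⟩))
          obtain ⟨γ, hγ, t3, ht3, hdec3⟩ := Submodule.mem_sup.mp hc₁
          obtain ⟨e, rfl⟩ := Ideal.mem_span_singleton'.mp ht3
          have hfin : (w - e * y) * x₁ ∈ B := by
            have he : (w - e * y) * x₁ = α + γ * y := by
              linear_combination -hdec1 - y * hdec3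
            rw [he]
            exact B.add_mem hα (B.mul_mem_right y hγ)
          have hwB : w - e * y ∈ B := hx₁ _ hfin
          have : w ∈ B ⊔ Ideal.span {y} := by
            have he : w = (w - e * y) + e * y := by ring
            rw [he]
            exact Submodule.add_mem _ (Ideal.mem_sup_left hwB)
              (Ideal.mem_sup_right (Ideal.mem_span_singleton'.mpr ⟨e, rfl⟩))
          exact hw this
      obtain ⟨u, hum, hu⟩ := avoid S hSfin hSprime _ hSavoid
      have hu1 : NZD (B ⊔ Ideal.span {x₁}) u :=
        nzd_of_forall_not_mem_assP (fun p hp => hu p (Or.inl hp))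
      have hu2 : NZD (B ⊔ Ideal.span {y}) u :=
        nzd_of_forall_not_mem_assP (fun p hp => hu p (Or.inr hp))
      -- first application of ih
      obtain ⟨ts₁, hts₁len, hts₁m, hts₁⟩ := ih (B ⊔ Ideal.span {x₁}) (x₂ :: rest) u
        (by simpa using hlen') (fun x hx => hxm x (List.mem_cons_of_mem _ hx)) hxs' hum hu1
      have hreg1 : RegSeq B (x₁ :: u :: ts₁) := ⟨hx₁, hts₁⟩
      have hreg2 : RegSeq B (u :: x₁ :: ts₁) := regseq_swap hx₁m hreg1
      obtain ⟨huB, hreg3⟩ := hreg2   -- hreg3 : RegSeq (B ⊔ span{u}) (x₁ :: ts₁)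
      -- y-u pair
      have hyu : RegSeq B (y :: u :: []) := ⟨hy, hu2, trivial⟩
      have huy : RegSeq B (u :: y :: []) := regseq_swap hym hyu
      have hyu2 : NZD (B ⊔ Ideal.span {u}) y := huy.2.1
      -- second application of ih
      obtain ⟨ss, hsslen, hssm, hss⟩ := ih (B ⊔ Ideal.span {u}) (x₁ :: ts₁) y
        (by simp [hts₁len]; omega)
        (by intro x hx; rcases List.mem_cons.mp hx with rfl | hx
            · exact hx₁m
            · exact hts₁m x hx)
        hreg3 hym hyu2
      have hfinal : RegSeq B (u :: y :: ss) := ⟨huB, hss⟩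
      have hfinal2 : RegSeq B (y :: u :: ss) := regseq_swap hum hfinal
      refine ⟨u :: ss, by simp [hsslen]; omega, ?_, hfinal2⟩
      intro x hx
      rcases List.mem_cons.mp hx with rfl | hx
      · exact hum
      · exact hssm x hx


lemma build {Q : Ideal A} (hrad : Q.radical = IsLocalRing.maximalIdeal A) :
    ∀ (rem built ext : List A),
      (∀ x ∈ rem, x ∈ Q) → RegSeq ⊥ built →
      Ideal.ofList built ⊔ Ideal.ofList rem = Q →
      RegSeq ⊥ (built ++ ext) → ext.length = rem.length →
      (∀ x ∈ ext, x ∈ IsLocalRing.maximalIdeal A) →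
      ∃ w : List A, w.length = built.length + rem.length ∧ RegSeq ⊥ w ∧
        Ideal.ofList w = Q := by
  classical
  have hQm : Q ≤ IsLocalRing.maximalIdeal A := le_trans Ideal.le_radical hrad.le
  intro rem
  induction rem with
  | nil =>
      intro built ext _ hb hspan _ _ _
      refine ⟨built, by simp, hb, ?_⟩
      simpa using hspan
  | cons x rest ih =>
      intro built ext hremQ hb hspan hbe hlen hem
      rcases ext with _ | ⟨e₁, ext'⟩
      · simp at hlen
      set Bi := Ideal.ofList built with hBi
      have hrestQ : Ideal.ofList rest ≤ Q := by
        rw [Ideal.ofList]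
        exact Ideal.span_le.mpr (fun r hr => hremQ r (List.mem_cons_of_mem _ hr))
      have hregext : RegSeq Bi (e₁ :: ext') := by
        have h2 := (regseq_append.mp hbe).2
        rwa [bot_sup_eq] at h2
      have he₁ : NZD Bi e₁ := hregext.1
      have hSfin := assP_finite (A := A) Bi
      have hcond : ∀ p ∈ hSfin.toFinset, ¬ (x ∈ p ∧ Ideal.ofList rest ≤ p) := by
        intro p hp ⟨hxp, hrp⟩
        have hp' : p ∈ assP Bi := hSfin.mem_toFinset.mp hp
        have hQp : Q ≤ p := by
          rw [← hspan, Ideal.ofList_cons]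
          refine sup_le (assP_le hp') (sup_le ?_ hrp)
          rwa [Ideal.span_singleton_le_iff_mem]
        have hmp : IsLocalRing.maximalIdeal A ≤ p := by
          rw [← hrad, ← hp'.1.radical]
          exact Ideal.radical_mono hQp
        obtain ⟨-, w, hw, hpeq⟩ := hp'
        have hmem : ∀ t : A, t ∈ p ↔ t * w ∈ Bi := by
          intro t; rw [hpeq]; exact Ideal.mem_colon_span_singleton
        have : w * e₁ ∈ Bi := by
          rw [mul_comm]
          exact (hmem e₁).mp (hmp (hem e₁ (by simp)))
        exact hw (he₁ w this)
      obtain ⟨y, hyrest, hyavoid⟩ := davis hSfin.toFinset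
        (fun p hp => (hSfin.mem_toFinset.mp hp).1) x (Ideal.ofList rest) hcond
      set z := x + y with hzdef
      have hzQ : z ∈ Q := Q.add_mem (hremQ x (by simp)) (hrestQ hyrest)
      have hzm : z ∈ IsLocalRing.maximalIdeal A := hQm hzQ
      have hznzd : NZD Bi z := by
        apply nzd_of_forall_not_mem_assP
        intro p hp
        exact hyavoid p (hSfin.mem_toFinset.mpr hp)
      have hbz : RegSeq ⊥ (built ++ [z]) := by
        rw [regseq_append]
        exact ⟨hb, by rw [bot_sup_eq]; exact ⟨hznzd, trivial⟩⟩
      have hxz : Ideal.span {z} ⊔ Ideal.ofList rest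
          = Ideal.span {x} ⊔ Ideal.ofList rest := by
        apply le_antisymm
        · refine sup_le ?_ le_sup_right
          rw [Ideal.span_singleton_le_iff_mem]
          exact Submodule.add_mem _
            (Ideal.mem_sup_left (Ideal.mem_span_singleton_self x))
            (Ideal.mem_sup_right hyrest)
        · refine sup_le ?_ le_sup_right
          rw [Ideal.span_singleton_le_iff_mem]
          have hx' : x = z - y := by rw [hzdef]; ring
          rw [hx']
          exact Submodule.sub_mem _
            (Ideal.mem_sup_left (Ideal.mem_span_singleton_self z))
            (Ideal.mem_sup_right hyrest)
      have hspan' : Ideal.ofList (built ++ [z]) ⊔ Ideal.ofList rest = Q := by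
        rw [Ideal.ofList_append]
        have h1 : Ideal.ofList [z] = Ideal.span {z} := Ideal.ofList_singleton z
        rw [h1, sup_assoc, hxz, ← sup_assoc]
        rw [← hspan, Ideal.ofList_cons, sup_assoc]
      obtain ⟨ts, htslen, htsm, hts⟩ := Klem (e₁ :: ext').length Bi (e₁ :: ext') z rfl
        hem hregext hzm hznzd
      have hext2 : RegSeq ⊥ ((built ++ [z]) ++ ts) := by
        rw [regseq_append, bot_sup_eq]
        refine ⟨hbz, ?_⟩
        have he : Ideal.ofList (built ++ [z]) = Bi ⊔ Ideal.span {z} := by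
          rw [Ideal.ofList_append, Ideal.ofList_singleton]
        rw [he]
        exact hts.2
      have hlen2 : ts.length = rest.length := by
        simp at htslen hlen
        omega
      obtain ⟨w, hwlen, hwreg, hwspan⟩ := ih (built ++ [z]) ts
        (fun r hr => hremQ r (List.mem_cons_of_mem _ hr)) hbz hspan' hext2 hlen2 htsm
      refine ⟨w, ?_, hwreg, hwspan⟩
      simp at hwlen ⊢
      omega

end KL

/-! ### The relation property of regular sequences -/

lemma ofList_ofFn {n : ℕ} (g : Fin n → A) :
    Ideal.ofList (List.ofFn g) = Ideal.span (Set.range g) := by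
  show Ideal.span _ = Ideal.span _
  congr 1
  ext a
  simp [List.mem_ofFn]

lemma starAux {B : Ideal A} :
    ∀ {n : ℕ} (v : Fin n → A), RegSeq B (List.ofFn v) → ∀ c : Fin n → A,
      (∑ i, c i * v i) ∈ B → ∀ i, c i ∈ B ⊔ Ideal.span (Set.range v) := by
  intro n
  induction n with
  | zero => intro v _ c _ i; exact i.elim0
  | succ n ih =>
    intro v hreg c hsum
    have hofn : List.ofFn v
        = List.ofFn (fun i : Fin n => v i.castSucc) ++ [v (Fin.last n)] := by
      rw [List.ofFn_succ', List.concat_eq_append]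
    rw [hofn] at hreg
    obtain ⟨hl, hx⟩ := regseq_append.mp hreg
    set W := Ideal.span (Set.range (fun i : Fin n => v i.castSucc)) with hW
    have hxnzd : NZD (B ⊔ W) (v (Fin.last n)) := by
      have := hx.1
      rwa [ofList_ofFn] at this
    have hsum' : (∑ i : Fin n, c i.castSucc * v i.castSucc)
        + c (Fin.last n) * v (Fin.last n) ∈ B := by
      rw [← Fin.sum_univ_castSucc (f := fun i => c i * v i)]
      exact hsum
    have hsub : (∑ i : Fin n, c i.castSucc * v i.castSucc) ∈ W := by
      apply Submodule.sum_mem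
      intro i _
      exact Ideal.mul_mem_left _ _ (Ideal.subset_span ⟨i, rfl⟩)
    have hclastmul : c (Fin.last n) * v (Fin.last n) ∈ B ⊔ W := by
      have he : c (Fin.last n) * v (Fin.last n)
          = ((∑ i : Fin n, c i.castSucc * v i.castSucc)
            + c (Fin.last n) * v (Fin.last n))
            - (∑ i : Fin n, c i.castSucc * v i.castSucc) := by ring
      rw [he]
      exact Submodule.sub_mem _ (Ideal.mem_sup_left hsum') (Ideal.mem_sup_right hsub)
    have hclast : c (Fin.last n) ∈ B ⊔ W := hxnzd _ hclastmul
    obtain ⟨b, hb, q, hq, hcdec⟩ := Submodule.mem_sup.mp hclast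
    obtain ⟨e, he⟩ := Ideal.mem_span_range_iff_exists_fun.mp hq
    have hrel : (∑ i : Fin n, (c i.castSucc + e i * v (Fin.last n)) * v i.castSucc) ∈ B := by
      have hexp : (∑ i : Fin n, (c i.castSucc + e i * v (Fin.last n)) * v i.castSucc)
          = (∑ i : Fin n, c i.castSucc * v i.castSucc)
            + (∑ i : Fin n, e i * v i.castSucc) * v (Fin.last n) := by
        rw [Finset.sum_mul, ← Finset.sum_add_distrib]
        exact Finset.sum_congr rfl (fun i _ => by ring)
      rw [hexp, he]
      have he2 : (∑ i : Fin n, c i.castSucc * v i.castSucc) + q * v (Fin.last n)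
          = ((∑ i : Fin n, c i.castSucc * v i.castSucc)
            + c (Fin.last n) * v (Fin.last n)) - b * v (Fin.last n) := by
        rw [← hcdec]; ring
      rw [he2]
      exact B.sub_mem hsum' (B.mul_mem_right _ hb)
    have hIH := ih (fun i : Fin n => v i.castSucc) hl
      (fun i => c i.castSucc + e i * v (Fin.last n)) hrel
    have hWle : W ≤ Ideal.span (Set.range v) := by
      apply Ideal.span_mono
      rintro a ⟨j, rfl⟩
      exact ⟨j.castSucc, rfl⟩
    have hlastmem : v (Fin.last n) ∈ Ideal.span (Set.range v) :=
      Ideal.subset_span ⟨Fin.last n, rfl⟩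
    have hmono : B ⊔ W ≤ B ⊔ Ideal.span (Set.range v) := sup_le_sup_left hWle B
    intro i
    refine Fin.lastCases ?_ ?_ i
    · rw [← hcdec]
      exact Submodule.add_mem _ (Ideal.mem_sup_left hb)
        (Ideal.mem_sup_right (hWle hq))
    · intro j
      have h1 := hIH j
      have he3 : c j.castSucc
          = (c j.castSucc + e j * v (Fin.last n)) - e j * v (Fin.last n) := by ring
      rw [he3]
      exact Submodule.sub_mem _ (hmono h1)
        (Ideal.mem_sup_right (Ideal.mul_mem_left _ _ hlastmem))

lemma star0 {n : ℕ} {v : Fin n → A} (hreg : RegSeq ⊥ (List.ofFn v)) {c : Fin n → A}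
    (hsum : (∑ i, c i * v i) = 0) (i : Fin n) : c i ∈ Ideal.span (Set.range v) := by
  have h := starAux v hreg c (by rw [hsum]; exact Submodule.zero_mem ⊥) i
  simpa using h


/-! ### The main abstract lemma -/

theorem main {Q J a L : Ideal A} {n : ℕ} (hn : 0 < n) (v : Fin n → A)
    (hreg : RegSeq ⊥ (List.ofFn v)) (hQ : Q = Ideal.span (Set.range v))
    (ha : a = Submodule.colon Q J) (h2 : a * J = a * Q)
    (hL : L = Submodule.colon Q a) :
    a * L = a * Q ∧ L * L = Q * L := by
  have hamem : ∀ t : A, t ∈ a ↔ ∀ j ∈ J, t * j ∈ Q := by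
    intro t
    rw [ha, Submodule.mem_colon]
    simp [smul_eq_mul]
  have hLmem : ∀ x : A, x ∈ L ↔ ∀ t ∈ a, x * t ∈ Q := by
    intro x
    rw [hL, Submodule.mem_colon]
    simp [smul_eq_mul]
  have hQa : Q ≤ a := fun t ht => (hamem t).mpr (fun j _ => Q.mul_mem_right j ht)
  have hQL : Q ≤ L := fun t ht => (hLmem t).mpr (fun s _ => Q.mul_mem_right s ht)
  have hvQ : ∀ i, v i ∈ Q := fun i => hQ ▸ Ideal.subset_span ⟨i, rfl⟩
  have hrep : ∀ z ∈ Q, ∃ c : Fin n → A, ∑ i, c i * v i = z := by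
    intro z hz
    exact Ideal.mem_span_range_iff_exists_fun.mp (hQ ▸ hz)
  have hrepa : ∀ z ∈ a * Q, ∃ c : Fin n → A, (∀ i, c i ∈ a) ∧ ∑ i, c i * v i = z := by
    intro z hz
    refine Submodule.mul_induction_on hz ?_ ?_
    · intro m hm w hw
      obtain ⟨c, hc⟩ := hrep w hw
      refine ⟨fun i => m * c i, fun i => Ideal.mul_mem_right _ _ hm, ?_⟩
      rw [← hc, Finset.mul_sum]
      exact Finset.sum_congr rfl (fun i _ => by ring)
    · rintro z₁ z₂ ⟨c₁, hc₁, he₁⟩ ⟨c₂, hc₂, he₂⟩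
      refine ⟨fun i => c₁ i + c₂ i, fun i => a.add_mem (hc₁ i) (hc₂ i), ?_⟩
      rw [← he₁, ← he₂, ← Finset.sum_add_distrib]
      exact Finset.sum_congr rfl (fun i _ => by ring)
  have hsuma : ∀ c : Fin n → A, (∀ i, c i ∈ a) → (∑ i, c i * v i) ∈ a * Q := by
    intro c hc
    exact Submodule.sum_mem _ (fun i _ => Ideal.mul_mem_mul (hc i) (hvQ i))
  have hsumQL : ∀ c : Fin n → A, (∀ i, c i ∈ L) → (∑ i, c i * v i) ∈ Q * L := by
    intro c hc
    refine Submodule.sum_mem _ (fun i _ => ?_)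
    rw [mul_comm (c i) (v i)]
    exact Ideal.mul_mem_mul (hvQ i) (hc i)
  -- core lemma 1 : x ∈ L, t ∈ a ⟹ x * t ∈ a * Q
  have core1 : ∀ x ∈ L, ∀ t ∈ a, x * t ∈ a * Q := by
    intro x hx t ht
    have hxt : x * t ∈ Q := (hLmem x).mp hx t ht
    obtain ⟨s, hs⟩ := hrep _ hxt
    have hclaim : ∀ i, s i ∈ a := by
      intro i
      refine (hamem (s i)).mpr (fun j hj => ?_)
      have htj : t * j ∈ a * Q := h2 ▸ Ideal.mul_mem_mul ht hj
      obtain ⟨u, hu, hueq⟩ := hrepa _ htj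
      have hrel : (∑ k, (s k * j - x * u k) * v k) = 0 := by
        have he : (∑ k, (s k * j - x * u k) * v k)
            = j * (∑ k, s k * v k) - x * (∑ k, u k * v k) := by
          simp only [sub_mul]
          rw [Finset.sum_sub_distrib, Finset.mul_sum, Finset.mul_sum]
          congr 1 <;> exact Finset.sum_congr rfl (fun k _ => by ring)
        rw [he, hs, hueq]; ring
      have hQmem : s i * j - x * u i ∈ Q := hQ ▸ star0 hreg hrel i
      have hxu : x * u i ∈ Q := (hLmem x).mp hx (u i) (hu i)
      have he : s i * j = (s i * j - x * u i) + x * u i := by ring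
      rw [he]
      exact Q.add_mem hQmem hxu
    rw [← hs]
    exact hsuma s hclaim
  have goal1 : a * L = a * Q := by
    apply le_antisymm
    · refine Ideal.mul_le.mpr (fun r hr x hx => ?_)
      rw [mul_comm r x]
      exact core1 x hx r hr
    · exact Ideal.mul_mono_right hQL
  -- L ≤ a
  have lemB : L ≤ a := by
    intro x hx
    set i0 : Fin n := ⟨0, hn⟩
    have hxt : x * v i0 ∈ a * Q := core1 x hx (v i0) (hQa (hvQ i0))
    obtain ⟨u, hu, hueq⟩ := hrepa _ hxt
    have hrel : (∑ k, (u k - (if k = i0 then x else 0)) * v k) = 0 := by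
      have he : (∑ k, (u k - (if k = i0 then x else 0)) * v k)
          = (∑ k, u k * v k) - (∑ k, (if k = i0 then x * v k else 0)) := by
        simp only [sub_mul]
        rw [Finset.sum_sub_distrib]
        congr 1
        exact Finset.sum_congr rfl (fun k _ => by split <;> simp)
      rw [he, hueq, Finset.sum_ite_eq' Finset.univ i0 (fun k => x * v k)]
      simp
    have hQmem : u i0 - x ∈ Q := by
      have h := hQ ▸ star0 hreg hrel i0
      simpa using h
    have he : x = u i0 - (u i0 - x) := by ring
    rw [he]
    exact a.sub_mem (hu i0) (hQa hQmem)
  -- core lemma 2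
  have core2 : ∀ x ∈ L, ∀ y ∈ L, x * y ∈ Q * L := by
    intro x hx y hy
    have hxy : x * y ∈ a * Q := core1 x hx y (lemB hy)
    obtain ⟨s, hs, hseq⟩ := hrepa _ hxy
    have hclaim : ∀ i, s i ∈ L := by
      intro i
      refine (hLmem (s i)).mpr (fun t ht => ?_)
      have hxt : x * t ∈ a * Q := core1 x hx t ht
      obtain ⟨u, hu, hueq⟩ := hrepa _ hxt
      have hrel : (∑ k, (s k * t - y * u k) * v k) = 0 := by
        have he : (∑ k, (s k * t - y * u k) * v k)
            = t * (∑ k, s k * v k) - y * (∑ k, u k * v k) := by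
          simp only [sub_mul]
          rw [Finset.sum_sub_distrib, Finset.mul_sum, Finset.mul_sum]
          congr 1 <;> exact Finset.sum_congr rfl (fun k _ => by ring)
        rw [he, hseq, hueq]; ring
      have hQmem : s i * t - y * u i ∈ Q := hQ ▸ star0 hreg hrel i
      have hyu : y * u i ∈ Q := (hLmem y).mp hy (u i) (hu i)
      have he : s i * t = (s i * t - y * u i) + y * u i := by ring
      rw [he]
      exact Q.add_mem hQmem hyu
    rw [← hseq]
    exact hsumQL s hclaim
  refine ⟨goal1, le_antisymm ?_ (Ideal.mul_mono_left hQL)⟩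
  exact Ideal.mul_le.mpr core2


/-! ### Glue with mathlib regular sequences -/

lemma regseq_of_prefixes : ∀ (l : List A) (B : Ideal A),
    (∀ (i : ℕ) (hi : i < l.length), NZD (B ⊔ Ideal.ofList (l.take i)) l[i]) →
    RegSeq B l := by
  intro l
  induction l with
  | nil => intro B _; trivial
  | cons x xs ih =>
      intro B h
      constructor
      · have h0 := h 0 (by simp)
        simpa using h0
      · apply ih
        intro i hi
        have h' := h (i + 1) (by simpa using Nat.succ_lt_succ hi)
        simpa [Ideal.ofList_cons, sup_assoc] using h'

lemma smul_top_eq (C : Ideal A) : (C • ⊤ : Submodule A A) = C := by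
  ext t
  constructor
  · intro ht
    refine Submodule.smul_induction_on ht (fun r hr s _ => ?_) (fun u v hu hv => C.add_mem hu hv)
    exact C.mul_mem_right s hr
  · intro ht
    have : t • (1 : A) ∈ (C • ⊤ : Submodule A A) :=
      Submodule.smul_mem_smul ht Submodule.mem_top
    simpa using this

lemma nzd_of_smulreg {C : Ideal A} {x : A}
    (h : IsSMulRegular (A ⧸ (C • ⊤ : Submodule A A)) x) : NZD C x := by
  intro z hz
  have h1 : x • (Submodule.Quotient.mk z : A ⧸ (C • ⊤ : Submodule A A)) = x • (0 : A ⧸ (C • ⊤ : Submodule A A)) := by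
    rw [smul_zero, ← Submodule.Quotient.mk_smul, Submodule.Quotient.mk_eq_zero, smul_top_eq]
    simpa [smul_eq_mul, mul_comm] using hz
  have h2 := h h1
  rw [Submodule.Quotient.mk_eq_zero, smul_top_eq] at h2
  exact h2

lemma regseq_of_isWeaklyRegular {rs : List A}
    (h : RingTheory.Sequence.IsWeaklyRegular A rs) : RegSeq ⊥ rs := by
  apply regseq_of_prefixes
  intro i hi
  have h' := h.regular_mod_prev i hi
  have := nzd_of_smulreg h'
  rwa [← bot_sup_eq (Ideal.ofList (rs.take i))] at this

lemma exists_eq_of_sSup_eq {S : Set ℕ∞} {d : ℕ} (hd : 0 < d) (h : sSup S = (d : ℕ∞)) :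
    ∃ s ∈ S, s = (d : ℕ∞) := by
  by_contra hcon
  push_neg at hcon
  have hle : ∀ s ∈ S, s ≤ ((d - 1 : ℕ) : ℕ∞) := by
    intro s hs
    have h1 : s ≤ (d : ℕ∞) := h ▸ le_sSup hs
    have h3 : s < (d : ℕ∞) := lt_of_le_of_ne h1 (hcon s hs)
    lift s to ℕ using h3.ne_top with k
    have hk : k < d := by exact_mod_cast h3
    exact_mod_cast Nat.le_sub_one_of_lt hk
  have h4 : sSup S ≤ ((d - 1 : ℕ) : ℕ∞) := sSup_le hle
  rw [h] at h4
  have h5 : d ≤ d - 1 := by exact_mod_cast h4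
  omega

end GGL10



theorem stmt10 (R : Type u) [CommRing R]
    (hCM : IsCMLocalRing R) (d : ℕ) (hd : 0 < d)
    (hdim : ringKrullDim R = (d : WithBot ℕ∞))
    (hres : ∀ m : Ideal R, m.IsMaximal → Infinite (R ⧸ m))
    (I : Ideal R) (hIne : I ≠ ⊤) (hcan : IsCanonicalModule R d ↥I)
    (hng : ¬ IsGorensteinLocalRing R)
    (f : Fin d → R) (hpar : IsParameterSystem R d f) (hf1 : f ⟨0, hd⟩ ∈ I)
    (Q : Ideal R) (hQ : Q = Ideal.span (Set.range f))
    (J : Ideal R) (hJ : J = I ⊔ Q)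
    (a : Ideal R) (hprim : IsMPrimaryIdeal R a)
    (h1 : a = Submodule.colon Q J) (h2 : a * J = a * Q)
    (h3 : ∃ (e : ℕ → ℤ) (r : ℕ), HasHilbertCoeffs R J d e ∧ HasCMTypeEq R d r ∧
      e 1 = (mLength R (R ⧸ a) : ℤ) * (r : ℤ))
    (L : Ideal R) (hL : L = Submodule.colon Q a) :
    a * L = a * Q ∧ L * L = Q * L := by
  obtain ⟨hloc, hnoeth, hdepth⟩ := hCM
  haveI := hloc
  haveI := hnoeth
  have hmmax : (IsLocalRing.maximalIdeal R).IsMaximal := IsLocalRing.maximalIdeal.isMaximal R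
  have hdep := hdepth _ hmmax
  rw [hdim] at hdep
  have hdep' : iDepth R (IsLocalRing.maximalIdeal R) R = ((d : ℕ) : ℕ∞) := by
    exact_mod_cast hdep
  have hdep'' : sSup {n : ℕ∞ | ∃ rs : List R,
      (∀ r ∈ rs, r ∈ IsLocalRing.maximalIdeal R) ∧ RingTheory.Sequence.IsRegular R rs ∧
      (rs.length : ℕ∞) = n} = ((d : ℕ) : ℕ∞) := hdep'
  obtain ⟨s, hsS, hsd⟩ := GGL10.exists_eq_of_sSup_eq hd hdep''
  obtain ⟨rs, hrsm, hrsreg, hrslen⟩ := hsS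
  rw [hsd] at hrslen
  have hrslen' : rs.length = d := by exact_mod_cast hrslen
  have hreg0 : GGL10.RegSeq ⊥ rs := GGL10.regseq_of_isWeaklyRegular hrsreg.toIsWeaklyRegular
  have hrad : Q.radical = IsLocalRing.maximalIdeal R := by
    rw [hQ]; exact hpar.2 _ hmmax
  have hfQ : ∀ x ∈ List.ofFn f, x ∈ Q := by
    intro x hx
    obtain ⟨i, rfl⟩ := List.mem_ofFn.mp hx
    rw [hQ]; exact Ideal.subset_span ⟨i, rfl⟩
  have hspan0 : Ideal.ofList ([] : List R) ⊔ Ideal.ofList (List.ofFn f) = Q := by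
    rw [GGL10.ofList_ofFn, hQ]
    simp
  obtain ⟨w, hwlen, hwreg, hwspan⟩ := GGL10.build hrad (List.ofFn f) [] rs hfQ trivial
    hspan0 (by simpa using hreg0) (by simp [hrslen']) hrsm
  have hnw : 0 < w.length := by
    rw [hwlen]
    simpa using hd
  have hofn : List.ofFn (fun i : Fin w.length => w.get i) = w := List.ofFn_get w
  have hQv : Q = Ideal.span (Set.range (fun i : Fin w.length => w.get i)) := by
    rw [← GGL10.ofList_ofFn, hofn, hwspan]
  exact GGL10.main hnw _ (by rwa [hofn]) hQv h1 h2 hL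

end
end

section
/- Let Q = (f_1,…,f_d) be an ideal generated by a regular sequence in a commutative Noetherian local ring R, let a be an ideal, and let L = Q :_R a. If aL ⊆ aQ and L² ⊆ Q, then L² = QL. -/
noncomputable section

open RingTheory.Sequence

universe u v

variable (R : Type u) [CommRing R]

namespace Stmt11Aux

variable {R : Type*} [CommRing R]

lemma ofList_ofFn {d : ℕ} (f : Fin d → R) :
    Ideal.ofList (List.ofFn f) = Ideal.span (Set.range f) := by
  unfold Ideal.ofList
  congr 1
  ext x
  simp [List.mem_ofFn]

lemma reg_mod (l : List R) (a : R) (h : IsWeaklyRegular R (l ++ [a])) (x : R)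
    (hx : a * x ∈ Ideal.ofList l) : x ∈ Ideal.ofList l := by
  rw [isWeaklyRegular_append_iff, isWeaklyRegular_singleton_iff] at h
  have h2 := h.2
  have : a • (Submodule.Quotient.mk x : R ⧸ (Ideal.ofList l • ⊤ : Submodule R R)) = a • (0 : R ⧸ (Ideal.ofList l • ⊤ : Submodule R R)) := by
    rw [smul_zero, ← Submodule.Quotient.mk_smul, Submodule.Quotient.mk_eq_zero]
    simpa [smul_eq_mul, Ideal.smul_top_eq_map] using hx
  have := h2 this
  rw [Submodule.Quotient.mk_eq_zero] at this
  simpa [smul_eq_mul] using this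

lemma key : ∀ (d : ℕ) (f : Fin d → R), IsWeaklyRegular R (List.ofFn f) →
    ∀ y : Fin d → R, (∑ i, f i * y i) ∈ Ideal.span (Set.range f) ^ 2 →
    ∀ i, y i ∈ Ideal.span (Set.range f) := by
  intro d
  induction d with
  | zero => intro f _ y _ i; exact i.elim0
  | succ d ih =>
    intro f hreg y hy i
    set f' : Fin d → R := f ∘ Fin.castSucc with hf'
    set a := f (Fin.last d) with ha
    have hlist : List.ofFn f = List.ofFn f' ++ [a] := by
      rw [List.ofFn_succ', List.concat_eq_append]; rfl
    set Q' := Ideal.span (Set.range f') with hQ'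
    set Q := Ideal.span (Set.range f) with hQ
    have hQ'Q : Q' ≤ Q := Ideal.span_mono (by rintro _ ⟨j, rfl⟩; exact ⟨j.castSucc, rfl⟩)
    have haQ : a ∈ Q := Ideal.subset_span ⟨Fin.last d, rfl⟩
    have hreg' : IsWeaklyRegular R (List.ofFn f') := by
      rw [hlist, isWeaklyRegular_append_iff] at hreg; exact hreg.1
    have hregmod : ∀ x : R, a * x ∈ Q' → x ∈ Q' := by
      intro x hx
      have := reg_mod (List.ofFn f') a (hlist ▸ hreg) x (by rwa [ofList_ofFn])
      rwa [ofList_ofFn] at this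
    -- decompose Q^2
    have hQsq : Q ^ 2 ≤ Q' ^ 2 ⊔ Ideal.span {a} * Q := by
      have hQle : Q ≤ Q' ⊔ Ideal.span {a} := by
        rw [hQ]
        apply Ideal.span_le.2
        rintro _ ⟨j, rfl⟩
        rcases Fin.eq_castSucc_or_eq_last j with ⟨k, rfl⟩ | rfl
        · exact Ideal.mem_sup_left (Ideal.subset_span ⟨k, rfl⟩)
        · exact Ideal.mem_sup_right (Ideal.subset_span rfl)
      calc Q ^ 2 ≤ (Q' ⊔ Ideal.span {a}) * Q := by
            rw [pow_two]; exact Ideal.mul_mono_left hQle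
        _ = Q' * Q ⊔ Ideal.span {a} * Q := by rw [Ideal.sup_mul]
        _ ≤ Q' ^ 2 ⊔ Ideal.span {a} * Q := by
            refine sup_le ?_ le_sup_right
            calc Q' * Q ≤ Q' * (Q' ⊔ Ideal.span {a}) := Ideal.mul_mono_right hQle
              _ = Q' * Q' ⊔ Q' * Ideal.span {a} := by rw [Ideal.mul_sup]
              _ ≤ Q' ^ 2 ⊔ Ideal.span {a} * Q := by
                  apply sup_le
                  · rw [pow_two]; exact le_sup_left
                  · rw [mul_comm]
                    exact le_sup_of_le_right (Ideal.mul_mono_right hQ'Q)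
    have hmem := hQsq hy
    rw [Submodule.mem_sup] at hmem
    obtain ⟨q', hq', w, hw, heq⟩ := hmem
    rw [Ideal.mem_span_singleton_mul] at hw
    obtain ⟨t, htQ, rfl⟩ := hw
    -- split the sum
    have hsum : ∑ j, f j * y j = (∑ j : Fin d, f' j * y j.castSucc) + a * y (Fin.last d) := by
      rw [Fin.sum_univ_castSucc]; rfl
    have hkey1 : a * (y (Fin.last d) - t) ∈ Q' := by
      have h1 : (∑ j : Fin d, f' j * y j.castSucc) ∈ Q' := by
        apply Ideal.sum_mem
        intro j _
        exact Ideal.mul_mem_right _ _ (Ideal.subset_span ⟨j, rfl⟩)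
      have h2 : (∑ j : Fin d, f' j * y j.castSucc) + a * (y (Fin.last d) - t) = q' := by
        rw [hsum] at heq; linear_combination -heq
      have hq'2 : q' ∈ Q' := (Ideal.pow_le_self two_ne_zero) hq'
      have := Q'.sub_mem hq'2 h1
      rwa [← h2, add_sub_cancel_left] at this
    have hyd : y (Fin.last d) - t ∈ Q' := hregmod _ hkey1
    -- case i = last
    rcases Fin.eq_castSucc_or_eq_last i with ⟨k, rfl⟩ | rfl
    swap
    · have : y (Fin.last d) = (y (Fin.last d) - t) + t := by ring
      rw [this]; exact Q.add_mem (hQ'Q hyd) htQ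
    -- i = castSucc k : get representation of y_last - t
    · obtain ⟨z, hz⟩ := (Submodule.mem_span_range_iff_exists_fun R).mp hyd
      have hsum2 : ∑ j : Fin d, f' j * (y j.castSucc + a * z j) = q' := by
        have : ∑ j : Fin d, f' j * (y j.castSucc + a * z j)
            = (∑ j : Fin d, f' j * y j.castSucc) + a * ∑ j : Fin d, z j • f' j := by
          rw [Finset.mul_sum, ← Finset.sum_add_distrib]
          congr 1; ext j; simp [smul_eq_mul]; ring
        rw [this, hz]
        rw [hsum] at heq
        linear_combination -heq
      have hq'sq : (∑ j : Fin d, f' j * (y j.castSucc + a * z j)) ∈ Q' ^ 2 := hsum2 ▸ hq'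
      have := ih f' hreg' (fun j => y j.castSucc + a * z j) hq'sq k
      have hyk : y k.castSucc = (y k.castSucc + a * z k) - a * z k := by ring
      rw [hyk]
      exact Q.sub_mem (hQ'Q this) (Ideal.mul_mem_right _ _ haQ)

end Stmt11Aux

theorem stmt11 (R : Type u) [CommRing R] [IsNoetherianRing R] [IsLocalRing R]
    (d : ℕ) (f : Fin d → R)
    (hreg : RingTheory.Sequence.IsRegular R (List.ofFn f))
    (Q : Ideal R) (hQ : Q = Ideal.span (Set.range f))
    (a : Ideal R) (L : Ideal R) (hL : L = Submodule.colon Q a)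
    (h1 : a * L ≤ a * Q) (h2 : L * L ≤ Q) :
    L * L = Q * L := by
  have hQL : Q ≤ L := by
    rw [hL]
    intro x hx
    rw [Submodule.mem_colon]
    intro p hp
    rw [smul_eq_mul]
    exact Ideal.mul_mem_right p Q hx
  apply le_antisymm
  · rw [Ideal.mul_le]
    intro x hx y hy
    have hm : x * y ∈ Q := h2 (Ideal.mul_mem_mul hx hy)
    rw [hQ] at hm
    obtain ⟨c, hc⟩ := (Submodule.mem_span_range_iff_exists_fun R).mp hm
    have hLLa : L * L * a ≤ Q * Q := by
      calc L * L * a = a * L * L := by ring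
        _ ≤ a * Q * L := Ideal.mul_mono_left h1
        _ = a * L * Q := by ring
        _ ≤ a * Q * Q := Ideal.mul_mono_left h1
        _ ≤ Q * Q := Ideal.mul_mono_left Ideal.mul_le_right
    have hci : ∀ i, c i ∈ L := by
      intro i
      rw [hL, Submodule.mem_colon]
      intro α hα
      have hmem : (∑ j, f j * (c j * α)) ∈ Ideal.span (Set.range f) ^ 2 := by
        have hs : ∑ j, f j * (c j * α) = (x * y) * α := by
          rw [← hc, Finset.sum_mul]
          congr 1; ext j; simp [smul_eq_mul]; ring
        rw [hs, pow_two, ← hQ]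
        exact hLLa (Ideal.mul_mem_mul (Ideal.mul_mem_mul hx hy) hα)
      have := Stmt11Aux.key d f hreg.toIsWeaklyRegular (fun j => c j * α) hmem i
      rw [← hQ] at this
      simpa [smul_eq_mul, mul_comm] using this
    rw [← hc]
    apply Ideal.sum_mem
    intro j _
    have : c j • f j = f j * c j := by rw [smul_eq_mul]; ring
    rw [this]
    exact Ideal.mul_mem_mul (hQ ▸ Ideal.subset_span ⟨j, rfl⟩) (hci j)
  · exact Ideal.mul_mono_left hQL

end
end
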